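/- Let B be a faithful section of a base of B(H)^+ and B̃ its dual section. Then the double dual section satisfies B̃̃ = B. -/

import Mathlib

open Matrix ComplexOrder

variable {n : ℕ}

abbrev MatC (n : ℕ) := Matrix (Fin n) (Fin n) ℂ

lemma trace_ct_mul_self (x : MatC n) :
    (xᴴ * x).trace = ((∑ i, ∑ j, Complex.normSq (x j i) : ℝ) : ℂ) := by
  simp only [Matrix.trace, Matrix.diag, Matrix.mul_apply, Matrix.conjTranspose_apply]
  push_cast
  congr 1; ext i; congr 1; ext j
  rw [Complex.star_def, mul_comm, Complex.mul_conj]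

noncomputable instance matCore : InnerProductSpace.Core ℝ (MatC n) where
  inner x y := (Matrix.trace (xᴴ * y)).re
  conj_inner_symm x y := by
    simp only [starRingEnd_apply, star_trivial]
    have : (yᴴ * x).trace = star ((xᴴ * y).trace) := by
      rw [← Matrix.trace_conjTranspose, Matrix.conjTranspose_mul,
        Matrix.conjTranspose_conjTranspose]
    rw [this]; simp [Complex.star_def]
  re_inner_nonneg x := by
    simp only [RCLike.re_to_real]
    rw [trace_ct_mul_self]
    simp only [Complex.ofReal_re]
    exact Finset.sum_nonneg fun i _ => Finset.sum_nonneg fun j _ => Complex.normSq_nonneg _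
  add_left x y z := by
    simp only [Matrix.conjTranspose_add, Matrix.add_mul, Matrix.trace_add, Complex.add_re]
  smul_left x y r := by
    simp only [starRingEnd_apply, star_trivial]
    rw [Matrix.conjTranspose_smul]
    simp [Matrix.smul_mul, Complex.real_smul]
  definite x h := by
    replace h : ((xᴴ * x).trace).re = 0 := h
    rw [trace_ct_mul_self] at h
    norm_cast at h
    have := (Finset.sum_eq_zero_iff_of_nonneg
      (fun i _ => Finset.sum_nonneg fun j _ => Complex.normSq_nonneg _)).mp h
    ext j i
    have h2 := (Finset.sum_eq_zero_iff_of_nonneg (fun j _ => Complex.normSq_nonneg _)).mp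
      (this i (Finset.mem_univ i)) j (Finset.mem_univ j)
    simpa [Complex.normSq_eq_zero] using h2

noncomputable instance : NormedAddCommGroup (MatC n) :=
  @InnerProductSpace.Core.toNormedAddCommGroup ℝ (MatC n) _ _ _ matCore

noncomputable instance : InnerProductSpace ℝ (MatC n) := InnerProductSpace.ofCore matCore.toCore

instance : FiniteDimensional ℝ (MatC n) := Module.Finite.trans ℂ (MatC n)

lemma matInner_def (x y : MatC n) : (inner ℝ x y : ℝ) = ((xᴴ * y).trace).re := rfl

/-- For Hermitian matrices the trace of the product is real. -/
lemma herm_trace_real (x y : MatC n) (hx : xᴴ = x) (hy : yᴴ = y) :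
    (x * y).trace = ((((x * y).trace).re : ℝ) : ℂ) := by
  have : star ((x * y).trace) = (x * y).trace := by
    rw [← Matrix.trace_conjTranspose, Matrix.conjTranspose_mul, hx, hy, Matrix.trace_mul_comm]
  exact ((Complex.conj_eq_iff_re).mp this).symm

lemma matInner_ct_left (k d : MatC n) (hd : dᴴ = d) : (inner ℝ kᴴ d : ℝ) = inner ℝ k d := by
  rw [matInner_def, matInner_def, Matrix.conjTranspose_conjTranspose]
  have : (k * d).trace = star ((kᴴ * d).trace) := by
    rw [← Matrix.trace_conjTranspose, Matrix.conjTranspose_mul,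
      Matrix.conjTranspose_conjTranspose, hd, Matrix.trace_mul_comm]
  rw [this, Complex.star_def, Complex.conj_re]

lemma matInner_ct_right (w k : MatC n) (hw : wᴴ = w) : (inner ℝ w kᴴ : ℝ) = inner ℝ w k := by
  rw [matInner_def, matInner_def, hw]
  have h1 : (w * kᴴ).trace = star ((w * k).trace) := by
    rw [← Matrix.trace_conjTranspose, Matrix.conjTranspose_mul, Matrix.trace_mul_comm, hw]
  have h2 : (w * k).trace = star ((w * k).trace) → True := fun _ => trivial
  rw [h1, Complex.star_def, Complex.conj_re]
lemma star_quad (m : MatC n) (hm : m.IsHermitian) (x : Fin n → ℂ) :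
    star (star x ⬝ᵥ m *ᵥ x) = star x ⬝ᵥ m *ᵥ x := by
  nth_rewrite 1 [star_dotProduct]
  rw [star_star, star_mulVec, hm.eq, ← dotProduct_mulVec]

lemma dot_self_eq (x : Fin n → ℂ) :
    star x ⬝ᵥ x = ((∑ i, Complex.normSq (x i) : ℝ) : ℂ) := by
  push_cast
  simp only [dotProduct, Pi.star_apply, Complex.star_def]
  congr 1; ext i
  rw [mul_comm, Complex.mul_conj]

lemma quad_bound (m : MatC n) (x : Fin n → ℂ) :
    ‖star x ⬝ᵥ m *ᵥ x‖ ≤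
      (∑ i, ∑ j, ‖m i j‖) * (∑ i, Complex.normSq (x i)) := by
  set S := ∑ i, Complex.normSq (x i) with hS
  have hterm : ∀ i j, ‖x i‖ * ‖x j‖ ≤ S := by
    intro i j
    have h1 : ‖x i‖ ^ 2 ≤ S := by
      rw [Complex.sq_norm]; exact Finset.single_le_sum (fun i _ => Complex.normSq_nonneg _) (Finset.mem_univ i)
    have h2 : ‖x j‖ ^ 2 ≤ S := by
      rw [Complex.sq_norm]; exact Finset.single_le_sum (fun i _ => Complex.normSq_nonneg _) (Finset.mem_univ j)
    nlinarith [norm_nonneg (x i), norm_nonneg (x j), sq_nonneg (‖x i‖ - ‖x j‖)]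
  calc ‖star x ⬝ᵥ m *ᵥ x‖
      ≤ ∑ i, ‖(star x) i * (m *ᵥ x) i‖ := norm_sum_le _ _
    _ ≤ ∑ i, ∑ j, ‖m i j‖ * S := by
        apply Finset.sum_le_sum
        intro i _
        rw [norm_mul]
        have hmv : (m *ᵥ x) i = ∑ j, m i j * x j := rfl
        have habs : ‖star x i‖ = ‖x i‖ := by simp
        rw [habs, hmv]
        calc ‖x i‖ * ‖∑ j, m i j * x j‖
            ≤ ‖x i‖ * ∑ j, ‖m i j * x j‖ :=
              mul_le_mul_of_nonneg_left (norm_sum_le _ _) (norm_nonneg _)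
          _ ≤ ∑ j, ‖m i j‖ * S := by
              rw [Finset.mul_sum]
              apply Finset.sum_le_sum
              intro j _
              rw [norm_mul, ← mul_assoc, mul_comm ‖x i‖, mul_assoc]
              exact mul_le_mul_of_nonneg_left (hterm i j) (norm_nonneg _)
    _ = (∑ i, ∑ j, ‖m i j‖) * S := by rw [Finset.sum_mul]; congr 1; ext i; rw [Finset.sum_mul]


lemma one_add_smul_psd (m : MatC n) (hm : m.IsHermitian) {e : ℝ} (he : 0 ≤ e)
    (hb : e * (∑ i, ∑ j, ‖m i j‖) ≤ 1) : ((1 : MatC n) + (e : ℂ) • m).PosSemidef := by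
  set K := ∑ i, ∑ j, ‖m i j‖ with hK
  refine posSemidef_iff_dotProduct_mulVec.mpr ⟨?_, ?_⟩
  · show _ = _
    rw [conjTranspose_add, conjTranspose_smul, conjTranspose_one, hm.eq, Complex.star_def,
      Complex.conj_ofReal]
  · intro x
    rw [add_mulVec, one_mulVec, dotProduct_add, smul_mulVec, dotProduct_smul,
      dot_self_eq]
    rw [smul_eq_mul]
    set z := star x ⬝ᵥ m *ᵥ x with hz
    set S := ∑ i, Complex.normSq (x i) with hS
    have hS0 : 0 ≤ S := Finset.sum_nonneg fun i _ => Complex.normSq_nonneg _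
    have him : z.im = 0 := by
      have := star_quad m hm x
      rw [Complex.star_def, Complex.conj_eq_iff_im] at this
      exact this
    have habs : ‖z‖ ≤ K * S := quad_bound m x
    have hre : |z.re| ≤ ‖z‖ := Complex.abs_re_le_norm z
    rw [Complex.nonneg_iff]
    constructor
    · simp only [Complex.add_re, Complex.ofReal_re, Complex.smul_re, Complex.real_smul,
        Complex.mul_re, Complex.ofReal_im, him]
      have h1 : -(K * S) ≤ z.re := by
        have := abs_le.mp (hre.trans habs)
        exact this.1
      nlinarith [h1]
    · simp [smul_eq_mul, Complex.add_im, Complex.mul_im, him]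

lemma one_pm_smul_psd (m : MatC n) (hm : m.IsHermitian) :
    ∃ ε : ℝ, 0 < ε ∧ ((1 : MatC n) + (ε : ℂ) • m).PosSemidef ∧ ((1 : MatC n) - (ε : ℂ) • m).PosSemidef := by
  set K := ∑ i, ∑ j, ‖m i j‖ with hK
  have hK0 : 0 ≤ K := Finset.sum_nonneg fun i _ => Finset.sum_nonneg fun j _ => norm_nonneg _
  have hKb : (1 / (K + 1)) * K ≤ 1 := by
    rw [div_mul_eq_mul_div, one_mul, div_le_one (by linarith)]; linarith
  refine ⟨1 / (K + 1), by positivity, one_add_smul_psd m hm (by positivity) hKb, ?_⟩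
  have hneg : ((1 : MatC n) - ((1 / (K + 1) : ℝ) : ℂ) • m) = (1 : MatC n) + ((1 / (K + 1) : ℝ) : ℂ) • (-m) := by
    rw [smul_neg, ← sub_eq_add_neg]
  rw [hneg]
  refine one_add_smul_psd (-m) hm.neg (by positivity) ?_
  have : ∀ i j, ‖(-m) i j‖ = ‖m i j‖ := by
    intro i j; simp
  simp only [this]
  exact hKb

open scoped MatrixOrder in
lemma posdef_pm_psd (b k : MatC n) (hb : b.PosDef) (hk : k.IsHermitian) :
    ∃ ε : ℝ, 0 < ε ∧ (b + (ε : ℂ) • k).PosSemidef ∧ (b - (ε : ℂ) • k).PosSemidef := by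
  set s := CFC.sqrt b with hs
  have hsherm : s.IsHermitian := (CFC.sqrt_nonneg b).posSemidef.1
  have hss : s * s = b := CFC.sqrt_mul_sqrt_self b hb.posSemidef.nonneg
  have hdet : IsUnit s.det := by
    have hb' : IsUnit b.det := hb.isUnit.map (detMonoidHom)
    rw [← hss, det_mul] at hb'
    exact (IsUnit.mul_iff.mp hb').1
  have hinv : s⁻¹ᴴ = s⁻¹ := by rw [conjTranspose_nonsing_inv, hsherm.eq]
  set m := s⁻¹ * k * s⁻¹ with hm
  have hmherm : m.IsHermitian := by
    show _ = _
    rw [hm, conjTranspose_mul, conjTranspose_mul, hinv, hk.eq, Matrix.mul_assoc]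
  obtain ⟨ε, hε, hp, hq⟩ := one_pm_smul_psd m hmherm
  have key : ∀ c : ℂ, s * ((1 : MatC n) + c • m) * s = b + c • k := by
    intro c
    rw [Matrix.mul_add, Matrix.add_mul, Matrix.mul_one, hss, Matrix.mul_smul, Matrix.smul_mul]
    congr 1
    rw [hm, ← Matrix.mul_assoc, ← Matrix.mul_assoc, Matrix.mul_nonsing_inv _ hdet, Matrix.one_mul,
      Matrix.mul_assoc, Matrix.nonsing_inv_mul _ hdet, Matrix.mul_one]
  have keyneg : s * ((1 : MatC n) - (ε : ℂ) • m) * s = b - (ε : ℂ) • k := by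
    rw [sub_eq_add_neg, sub_eq_add_neg, ← neg_smul, key, neg_smul]
  refine ⟨ε, hε, ?_, ?_⟩
  · have := hp.conjTranspose_mul_mul_same s
    rwa [hsherm.eq, key] at this
  · have := hq.conjTranspose_mul_mul_same s
    rwa [hsherm.eq, keyneg] at this

def Sb (b : Matrix (Fin n) (Fin n) ℂ) : Set (Matrix (Fin n) (Fin n) ℂ) :=
  {a | a.PosSemidef ∧ (a * b).trace = 1}

/-- `B` is a section of a base of the positive cone. -/
def IsSection (B : Set (Matrix (Fin n) (Fin n) ℂ)) : Prop :=
  ∃ (L : Submodule ℝ (Matrix (Fin n) (Fin n) ℂ)) (b : Matrix (Fin n) (Fin n) ℂ),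
    b.PosDef ∧ B = (L : Set (Matrix (Fin n) (Fin n) ℂ)) ∩ Sb b

/-- `B` is a faithful section: a section containing a positive definite element. -/
def IsFaithfulSection (B : Set (Matrix (Fin n) (Fin n) ℂ)) : Prop :=
  IsSection B ∧ ∃ b ∈ B, b.PosDef

/-- The dual section. -/
def dualSection (B : Set (Matrix (Fin n) (Fin n) ℂ)) : Set (Matrix (Fin n) (Fin n) ℂ) :=
  {c | c.PosSemidef ∧ ∀ b ∈ B, (b * c).trace = 1}

/-- For a faithful section `B`, the double dual section equals `B`. -/
theorem stmt9 (B : Set (Matrix (Fin n) (Fin n) ℂ)) (hB : IsFaithfulSection B) :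
    dualSection (dualSection B) = B := by
  obtain ⟨⟨L, b, hb, hBeq⟩, b₀, hb₀B, _hb₀pd⟩ := hB
  -- basic facts about elements of B
  have hBmem : ∀ a ∈ B, a ∈ L ∧ aᴴ = a ∧ (a * b).trace = 1 := by
    intro a ha
    rw [hBeq] at ha
    exact ⟨ha.1, ha.2.1.1, ha.2.2⟩
  have hb₀ := hBmem b₀ hb₀B
  -- b belongs to the dual section
  have hbdual : b ∈ dualSection B := by
    refine ⟨hb.posSemidef, fun a ha => (hBmem a ha).2.2⟩
  apply Set.Subset.antisymm
  · -- hard inclusion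
    intro d hd
    obtain ⟨hdpsd, hdtr⟩ := hd
    have hdH : dᴴ = d := hdpsd.1
    have hdb : (d * b).trace = 1 := by rw [Matrix.trace_mul_comm]; exact hdtr b hbdual
    -- the submodule V of traceless hermitian directions in L
    let V : Submodule ℝ (MatC n) :=
      { carrier := {x | x ∈ L ∧ xᴴ = x ∧ (x * b).trace = 0}
        zero_mem' := by simp
        add_mem' := by
          rintro x y ⟨hxL, hxH, hxt⟩ ⟨hyL, hyH, hyt⟩
          exact ⟨L.add_mem hxL hyL, by rw [Matrix.conjTranspose_add, hxH, hyH],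
            by rw [Matrix.add_mul, Matrix.trace_add, hxt, hyt, add_zero]⟩
        smul_mem' := by
          rintro r x ⟨hxL, hxH, hxt⟩
          refine ⟨L.smul_mem r hxL, ?_, ?_⟩
          · rw [Matrix.conjTranspose_smul, star_trivial, hxH]
          · rw [Matrix.smul_mul, Matrix.trace_smul, hxt, smul_zero] }
    let W : Submodule ℝ (MatC n) := V ⊔ Submodule.span ℝ {b₀}
    -- membership facts for W
    have hb₀W : b₀ ∈ W := Submodule.mem_sup_right (Submodule.mem_span_singleton_self b₀)
    have hBW : ∀ a ∈ B, a ∈ W := by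
      intro a ha
      obtain ⟨haL, haH, hat⟩ := hBmem a ha
      have hsub : a - b₀ ∈ V := by
        refine ⟨L.sub_mem haL hb₀.1, ?_, ?_⟩
        · rw [Matrix.conjTranspose_sub, haH, hb₀.2.1]
        · rw [Matrix.sub_mul, Matrix.trace_sub, hat, hb₀.2.2, sub_self]
      have := W.add_mem (Submodule.mem_sup_left hsub) hb₀W
      simpa using this
    have hWL : ∀ w ∈ W, w ∈ L := by
      intro w hw
      have : W ≤ L := sup_le (fun x hx => hx.1)
        ((Submodule.span_le).mpr (by simpa using hb₀.1))
      exact this hw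
    have hWH : ∀ w ∈ W, wᴴ = w := by
      intro w hw
      let Herm : Submodule ℝ (MatC n) :=
        { carrier := {x | xᴴ = x}
          zero_mem' := by simp
          add_mem' := by
            rintro x y hx hy
            show _ = _
            rw [Matrix.conjTranspose_add]
            exact congrArg₂ (· + ·) hx hy
          smul_mem' := by
            rintro r x hx
            show _ = _
            rw [Matrix.conjTranspose_smul, star_trivial]
            exact congrArg _ hx }
      have : W ≤ Herm := sup_le (fun x hx => hx.2.1)
        ((Submodule.span_le).mpr (by intro x hx; simp at hx; subst hx; exact hb₀.2.1))
      exact this hw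
    -- key step : d ∈ W by double orthogonal complement
    have hdW : d ∈ W := by
      rw [← Submodule.orthogonal_orthogonal W]
      rw [Submodule.mem_orthogonal]
      intro k hk
      -- replace k by its hermitian part k'
      set k' : MatC n := (2⁻¹ : ℝ) • (k + kᴴ) with hk'def
      have hk'H : k'ᴴ = k' := by
        rw [hk'def, Matrix.conjTranspose_smul, star_trivial, Matrix.conjTranspose_add,
          Matrix.conjTranspose_conjTranspose, add_comm]
      have hkH_mem : kᴴ ∈ Wᗮ := by
        rw [Submodule.mem_orthogonal]
        intro w hw
        rw [matInner_ct_right w k (hWH w hw)]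
        exact (Submodule.mem_orthogonal _ _).mp hk w hw
      have hk'W : k' ∈ Wᗮ := Submodule.smul_mem _ _ (Submodule.add_mem _ hk hkH_mem)
      -- reduce the goal to the hermitian part
      have hinner_eq : (inner ℝ k d : ℝ) = inner ℝ k' d := by
        have h1 : (inner ℝ k' d : ℝ) = (2⁻¹ : ℝ) * ((inner ℝ k d : ℝ) + inner ℝ kᴴ d) := by
          rw [hk'def, real_inner_smul_left, inner_add_left]
        rw [h1, matInner_ct_left k d hdH]
        ring
      rw [hinner_eq]
      -- now show inner k' d = 0 via perturbation of b in the dual section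
      obtain ⟨ε, hε, hp, hq⟩ := posdef_pm_psd b k' hb hk'H
      have htr0 : ∀ a ∈ B, (a * k').trace = 0 := by
        intro a ha
        have haW := hBW a ha
        have haH := (hBmem a ha).2.1
        have h0 : (inner ℝ a k' : ℝ) = 0 := (Submodule.mem_orthogonal _ _).mp hk'W a haW
        rw [matInner_def, haH] at h0
        rw [herm_trace_real a k' haH hk'H, h0, Complex.ofReal_zero]
      have hplus : b + (ε : ℂ) • k' ∈ dualSection B := by
        refine ⟨hp, fun a ha => ?_⟩
        rw [Matrix.mul_add, Matrix.trace_add, Matrix.mul_smul, Matrix.trace_smul,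
          (hBmem a ha).2.2, htr0 a ha, smul_zero, add_zero]
      have hminus : b - (ε : ℂ) • k' ∈ dualSection B := by
        refine ⟨hq, fun a ha => ?_⟩
        rw [Matrix.mul_sub, Matrix.trace_sub, Matrix.mul_smul, Matrix.trace_smul,
          (hBmem a ha).2.2, htr0 a ha, smul_zero, sub_zero]
      have h1 := hdtr _ hplus
      have h2 := hdtr _ hminus
      rw [Matrix.add_mul, Matrix.trace_add, Matrix.smul_mul, Matrix.trace_smul] at h1
      rw [Matrix.sub_mul, Matrix.trace_sub, Matrix.smul_mul, Matrix.trace_smul] at h2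
      have h3 : (ε : ℂ) • (k' * d).trace = 0 := by
        have := sub_eq_zero_of_eq (h1.trans h2.symm)
        simp only [add_sub_sub_cancel] at this
        have h2ε : (2 : ℂ) • ((ε : ℂ) • (k' * d).trace) = 0 := by
          rw [two_smul]; exact this
        simpa using h2ε
      have h4 : (k' * d).trace = 0 := by
        have hεne : (ε : ℂ) ≠ 0 := by exact_mod_cast hε.ne'
        rw [smul_eq_mul] at h3
        exact (mul_eq_zero.mp h3).resolve_left hεne
      rw [matInner_def, hk'H, h4]
      simp
    -- conclude
    rw [hBeq]
    exact ⟨hWL d hdW, hdpsd, hdb⟩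
  · -- easy inclusion
    intro a ha
    have hBa := hBmem a ha
    refine ⟨?_, fun c hc => ?_⟩
    · rw [hBeq] at ha; exact ha.2.1
    · rw [Matrix.trace_mul_comm]; exact hc.2 a ha
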